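/- Ordinal efficiency and likelihood envy-freeness are incompatible: there exists an instance of the assignment problem with uncertain priorities (a number of agents, items, strict agent preferences, and a finitely supported random priority Σ) such that no random assignment satisfies both OE and LEF. -/

import Mathlib

open Finset

/-- `X` stochastically dominates `Y` under the ranking `π` (a bijection from items to ranks):
for every rank `t`, the cumulative probability of the `t` most-preferred items is at least
as large under `X` as under `Y`. -/
def SD {m : ℕ} (π : Equiv.Perm (Fin m)) (X Y : Fin m → ℝ) : Prop :=
  ∀ t : Fin m, ∑ r ∈ Finset.Iic t, Y (π.symm r) ≤ ∑ r ∈ Finset.Iic t, X (π.symm r)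

/-- A random assignment: an `n × m` matrix of nonnegative reals, each row summing to `1`
and each column summing to at most `1`. -/
def IsRandomAssignment {n m : ℕ} (P : Fin n → Fin m → ℝ) : Prop :=
  (∀ i j, 0 ≤ P i j) ∧ (∀ i, ∑ j, P i j = 1) ∧ (∀ j, ∑ i, P i j ≤ 1)

/-- A random priority: a (finitely supported) probability distribution over simple priorities
(bijections from agents to ranks). -/
def IsRandomPriority {n : ℕ} (ρ : Equiv.Perm (Fin n) → ℝ) : Prop :=
  (∀ σ, 0 ≤ ρ σ) ∧ (∑ σ, ρ σ = 1)

/-- A lottery: a probability distribution over simple assignments (injective maps from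
agents to items). -/
def IsLottery {n m : ℕ} (L : (Fin n → Fin m) → ℝ) : Prop :=
  (∀ f, 0 ≤ L f) ∧ (∑ f, L f = 1) ∧ (∀ f, L f ≠ 0 → Function.Injective f)

/-- The random assignment induced by a lottery: `p i j = Pr_{f ∼ L}[f i = j]`. -/
def induced {n m : ℕ} (L : (Fin n → Fin m) → ℝ) : Fin n → Fin m → ℝ :=
  fun i j => ∑ f ∈ Finset.univ.filter (fun f => f i = j), L f

/-- `rankDist ρ i r = Pr_{σ ∼ Σ}[σ i = r]`, agent `i`'s rank distribution. -/
def rankDist {n : ℕ} (ρ : Equiv.Perm (Fin n) → ℝ) (i r : Fin n) : ℝ :=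
  ∑ σ ∈ Finset.univ.filter (fun σ => σ i = r), ρ σ

/-- Ordinal efficiency: no other random assignment stochastically dominates `P`
for every agent. -/
def OE {n m : ℕ} (π : Fin n → Equiv.Perm (Fin m)) (P : Fin n → Fin m → ℝ) : Prop :=
  ¬ ∃ Q : Fin n → Fin m → ℝ, IsRandomAssignment Q ∧ Q ≠ P ∧ ∀ i, SD (π i) (Q i) (P i)

/-- Stochastic envy-freeness: whenever `i`'s rank distribution (cumulatively)
stochastically dominates `j`'s, agent `i`'s allocation stochastically dominates `j`'s
under `i`'s preferences. -/
def SEF {n m : ℕ} (π : Fin n → Equiv.Perm (Fin m)) (ρ : Equiv.Perm (Fin n) → ℝ)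
    (P : Fin n → Fin m → ℝ) : Prop :=
  ∀ i j : Fin n,
    (∀ t : Fin n, ∑ r ∈ Finset.Iic t, rankDist ρ j r ≤ ∑ r ∈ Finset.Iic t, rankDist ρ i r) →
    SD (π i) (P i) (P j)

/-- `Pr_{σ ∼ Σ}[σ i < σ j]`: the probability that agent `i` has higher priority than `j`. -/
def prHigher {n : ℕ} (ρ : Equiv.Perm (Fin n) → ℝ) (i j : Fin n) : ℝ :=
  ∑ σ ∈ Finset.univ.filter (fun σ => σ i < σ j), ρ σ

/-- `Pr_{f ∼ L}[f i ≻_i f j]`: the probability that agent `i` prefers her own item to `j`'s. -/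
def prPrefers {n m : ℕ} (π : Fin n → Equiv.Perm (Fin m)) (L : (Fin n → Fin m) → ℝ)
    (i j : Fin n) : ℝ :=
  ∑ f ∈ Finset.univ.filter (fun f => π i (f i) < π i (f j)), L f

/-- Likelihood envy-freeness: some lottery inducing `P` satisfies
`Pr[σ i < σ j] ≤ Pr[f i ≻_i f j]` for all agents `i`, `j`. -/
def LEF {n m : ℕ} (π : Fin n → Equiv.Perm (Fin m)) (ρ : Equiv.Perm (Fin n) → ℝ)
    (P : Fin n → Fin m → ℝ) : Prop :=
  ∃ L : (Fin n → Fin m) → ℝ, IsLottery L ∧ induced L = P ∧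
    ∀ i j : Fin n, prHigher ρ i j ≤ prPrefers π L i j

/-- 1-LEF: some lottery inducing `P` satisfies: whenever `i` has higher priority than `j`
with probability `1`, agent `i` prefers her item to `j`'s with probability `1`. -/
def OneLEF {n m : ℕ} (π : Fin n → Equiv.Perm (Fin m)) (ρ : Equiv.Perm (Fin n) → ℝ)
    (P : Fin n → Fin m → ℝ) : Prop :=
  ∃ L : (Fin n → Fin m) → ℝ, IsLottery L ∧ induced L = P ∧
    ∀ i j : Fin n, i ≠ j → prHigher ρ i j = 1 → prPrefers π L i j = 1

/-- The baseline allocation of agent `i`: she gets her `r`-th preferred item with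
probability `Pr[σ i = r]` (ranks beyond `n` get probability `0`). -/
def baseline {n m : ℕ} (π : Fin n → Equiv.Perm (Fin m)) (ρ : Equiv.Perm (Fin n) → ℝ)
    (i : Fin n) (j : Fin m) : ℝ :=
  ∑ σ ∈ Finset.univ.filter (fun σ => (σ i : ℕ) = (π i j : ℕ)), ρ σ

/-- Ranked proportionality: every agent's allocation stochastically dominates
her baseline allocation. -/
def PROP {n m : ℕ} (π : Fin n → Equiv.Perm (Fin m)) (ρ : Equiv.Perm (Fin n) → ℝ)
    (P : Fin n → Fin m → ℝ) : Prop :=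
  ∀ i : Fin n, SD (π i) (P i) (baseline π ρ i)

/-- Pareto efficiency of a simple assignment: no injective assignment makes every agent
weakly better off and some agent strictly better off. -/
def ParetoEff {n m : ℕ} (π : Fin n → Equiv.Perm (Fin m)) (f : Fin n → Fin m) : Prop :=
  ¬ ∃ g : Fin n → Fin m, Function.Injective g ∧
      (∀ i, g i = f i ∨ π i (g i) < π i (f i)) ∧ (∃ i, π i (g i) < π i (f i))

/-- Envy-freeness of a simple assignment with respect to a simple priority. -/
def EnvyFree {n m : ℕ} (π : Fin n → Equiv.Perm (Fin m)) (σ : Equiv.Perm (Fin n))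
    (f : Fin n → Fin m) : Prop :=
  ∀ i j : Fin n, σ i < σ j → π i (f i) < π i (f j)

/-! ### Auxiliary material for the counterexample -/

/-- The second priority order: agents `2,3` first, then `0,1`. -/
def sigB : Equiv.Perm (Fin 4) := ⟨![2,3,0,1], ![2,3,0,1], by decide, by decide⟩

/-- The random priority: `1/2` on the identity order, `1/2` on `sigB`. -/
noncomputable def myρ : Equiv.Perm (Fin 4) → ℝ := fun σ =>
  (if σ = 1 then 1/2 else 0) + (if σ = sigB then 1/2 else 0)

/-- Preferences: agents `0,1` rank items `a ≻ b ≻ c ≻ d`; agents `2,3` rank `b ≻ a ≻ c ≻ d`. -/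
def myπ : Fin 4 → Equiv.Perm (Fin 4) := ![1, 1, Equiv.swap 0 1, Equiv.swap 0 1]

lemma sum_myρ (s : Finset (Equiv.Perm (Fin 4))) :
    ∑ σ ∈ s, myρ σ = (if (1 : Equiv.Perm (Fin 4)) ∈ s then (1:ℝ)/2 else 0) +
      (if sigB ∈ s then (1:ℝ)/2 else 0) := by
  unfold myρ
  rw [Finset.sum_add_distrib, Finset.sum_ite_eq' s, Finset.sum_ite_eq' s]

lemma prH_vals : prHigher myρ 0 1 = 1 ∧ prHigher myρ 1 2 = 1/2 ∧ prHigher myρ 1 3 = 1/2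
    ∧ prHigher myρ 2 3 = 1 ∧ prHigher myρ 3 1 = 1/2 ∧ prHigher myρ 3 0 = 1/2 := by
  unfold prHigher
  rw [sum_myρ, sum_myρ, sum_myρ, sum_myρ, sum_myρ, sum_myρ]
  simp only [Finset.mem_filter, Finset.mem_univ, true_and]
  norm_num [sigB, show ((2:Fin 4)<3) by decide, show ((1:Fin 4)<3) by decide,
    show ¬((3:Fin 4)=0) by decide, show ((1:Fin 4)<2) by decide, show ((0:Fin 4)<1) by decide,
    show (![2,3,0,1] : Fin 4 → Fin 4) 2 = 0 from rfl, show (![2,3,0,1] : Fin 4 → Fin 4) 3 = 1 from rfl,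
    show ((0:Fin 4)≤3) by decide, show ((1:Fin 4)≤3) by decide]

set_option maxRecDepth 10000 in
lemma key1 : ∀ f : Fin 4 → Fin 4, Function.Injective f →
    ((if myπ 0 (f 0) < myπ 0 (f 1) then (1:ℕ) else 0) +
     (if myπ 1 (f 1) < myπ 1 (f 2) then 1 else 0) +
     (if myπ 1 (f 1) < myπ 1 (f 3) then 1 else 0) +
     (if myπ 2 (f 2) < myπ 2 (f 3) then 1 else 0) +
     (if myπ 3 (f 3) < myπ 3 (f 1) then 1 else 0)
     ≤ 3 + ((if f 0 = 1 then 1 else 0) + (if f 1 = 1 then 1 else 0))) := by decide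

set_option maxRecDepth 10000 in
lemma key2 : ∀ f : Fin 4 → Fin 4, Function.Injective f →
    ((if myπ 0 (f 0) < myπ 0 (f 1) then (1:ℕ) else 0) +
     (if myπ 1 (f 1) < myπ 1 (f 3) then 1 else 0) +
     (if myπ 2 (f 2) < myπ 2 (f 3) then 1 else 0) +
     (if myπ 3 (f 3) < myπ 3 (f 0) then 1 else 0) +
     (if myπ 3 (f 3) < myπ 3 (f 1) then 1 else 0)
     ≤ 3 + ((if f 2 = 0 then 1 else 0) + (if f 3 = 0 then 1 else 0))) := by decide

lemma sum_bound (L : (Fin 4 → Fin 4) → ℝ) (hL : IsLottery L)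
    (c1 c2 c3 c4 c5 : (Fin 4 → Fin 4) → Prop) (a1 a2 j0 : Fin 4)
    [∀ f, Decidable (c1 f)] [∀ f, Decidable (c2 f)] [∀ f, Decidable (c3 f)]
    [∀ f, Decidable (c4 f)] [∀ f, Decidable (c5 f)]
    (hkey : ∀ f : Fin 4 → Fin 4, Function.Injective f →
      ((if c1 f then (1:ℕ) else 0) + (if c2 f then 1 else 0) + (if c3 f then 1 else 0) +
       (if c4 f then 1 else 0) + (if c5 f then 1 else 0)
       ≤ 3 + ((if f a1 = j0 then 1 else 0) + (if f a2 = j0 then 1 else 0)))) :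
    (∑ f ∈ Finset.univ.filter c1, L f) + (∑ f ∈ Finset.univ.filter c2, L f) +
    (∑ f ∈ Finset.univ.filter c3, L f) + (∑ f ∈ Finset.univ.filter c4, L f) +
    (∑ f ∈ Finset.univ.filter c5, L f)
      ≤ 3 + (induced L a1 j0 + induced L a2 j0) := by
  obtain ⟨hnn, hsum, hinj⟩ := hL
  have h3 : (3:ℝ) = ∑ f : Fin 4 → Fin 4, 3 * L f := by
    rw [← Finset.mul_sum, hsum, mul_one]
  unfold induced
  rw [Finset.sum_filter, Finset.sum_filter, Finset.sum_filter, Finset.sum_filter,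
    Finset.sum_filter, Finset.sum_filter, Finset.sum_filter, h3,
    ← Finset.sum_add_distrib, ← Finset.sum_add_distrib, ← Finset.sum_add_distrib,
    ← Finset.sum_add_distrib, ← Finset.sum_add_distrib, ← Finset.sum_add_distrib]
  apply Finset.sum_le_sum
  intro f _
  by_cases h0 : L f = 0
  · simp [h0]
  · have hfi := hinj f h0
    have hk := hkey f hfi
    have hkR : (if c1 f then (1:ℝ) else 0) + (if c2 f then 1 else 0) + (if c3 f then 1 else 0) +
        (if c4 f then 1 else 0) + (if c5 f then 1 else 0)
        ≤ 3 + ((if f a1 = j0 then 1 else 0) + (if f a2 = j0 then 1 else 0)) := by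
      exact_mod_cast hk
    have hL0 := hnn f
    calc (if c1 f then L f else 0) + (if c2 f then L f else 0) + (if c3 f then L f else 0) +
        (if c4 f then L f else 0) + (if c5 f then L f else 0)
        = ((if c1 f then (1:ℝ) else 0) + (if c2 f then 1 else 0) + (if c3 f then 1 else 0) +
          (if c4 f then 1 else 0) + (if c5 f then 1 else 0)) * L f := by
          split_ifs <;> ring
      _ ≤ (3 + ((if f a1 = j0 then (1:ℝ) else 0) + (if f a2 = j0 then 1 else 0))) * L f :=
          mul_le_mul_of_nonneg_right hkR hL0
      _ = 3 * L f + ((if f a1 = j0 then L f else 0) + (if f a2 = j0 then L f else 0)) := by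
          split_ifs <;> ring

lemma cycle (P : Fin 4 → Fin 4 → ℝ) (hP : IsRandomAssignment P) (i k : Fin 4)
    (hik : i ≠ k) (hπi : myπ i = 1) (hπk : myπ k = Equiv.swap 0 1)
    (hib : 0 < P i 1) (hka : 0 < P k 0) : ¬ OE myπ P := by
  obtain ⟨hnn, hrow, hcol⟩ := hP
  set ε : ℝ := min (P i 1) (P k 0) with hε
  have hε1 : ε ≤ P i 1 := min_le_left _ _
  have hε2 : ε ≤ P k 0 := min_le_right _ _
  have hεpos : 0 < ε := lt_min hib hka
  set e : Fin 4 → ℝ := fun j => (if j = 0 then ε else 0) + (if j = 1 then -ε else 0) with he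
  have esum : ∑ j, e j = 0 := by
    rw [Fin.sum_univ_four]; simp [he]
  have eIic : ∀ t : Fin 4, 0 ≤ ∑ r ∈ Finset.Iic t, e r := by
    intro t
    rw [he]
    rw [Finset.sum_add_distrib, Finset.sum_ite_eq' (Finset.Iic t),
      Finset.sum_ite_eq' (Finset.Iic t)]
    have h0 : (0 : Fin 4) ∈ Finset.Iic t := Finset.mem_Iic.2 (Fin.zero_le t)
    rw [if_pos h0]
    split <;> linarith
  have hki : k ≠ i := Ne.symm hik
  set D : Fin 4 → Fin 4 → ℝ := fun a j =>
    (if a = i then e j else 0) + (if a = k then -(e j) else 0) with hD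
  intro hOE
  apply hOE
  refine ⟨fun a j => P a j + D a j, ⟨?_, ?_, ?_⟩, ?_, ?_⟩
  · -- nonneg
    intro a j
    simp only [hD]
    split_ifs with h1 h2 h2
    · exact absurd (h1 ▸ h2) hik
    · have h' : ε ≤ P a 1 := by rw [h1]; exact hε1
      fin_cases j <;> simp [he] <;> linarith [hnn a 0, hnn a 2, hnn a 3]
    · have h' : ε ≤ P a 0 := by rw [h2]; exact hε2
      fin_cases j <;> simp [he] <;> linarith [hnn a 1, hnn a 2, hnn a 3]
    · simpa using hnn a j
  · -- rows
    intro a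
    rw [Finset.sum_add_distrib, hrow a, hD]
    have : ∑ j : Fin 4, ((if a = i then e j else 0) + (if a = k then -(e j) else 0)) = 0 := by
      by_cases h1 : a = i
      · have h2 : ¬ a = k := by rw [h1]; exact hik
        simp [h1, h2, hik, esum]
      · by_cases h2 : a = k
        · simp [h1, h2, Finset.sum_add_distrib, esum]
        · simp [h1, h2]
    rw [this, add_zero]
  · -- cols
    intro j
    rw [Finset.sum_add_distrib, hD]
    have : ∑ a : Fin 4, ((if a = i then e j else 0) + (if a = k then -(e j) else 0)) = 0 := by
      rw [Finset.sum_add_distrib, Finset.sum_ite_eq' Finset.univ i (fun _ => e j),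
        Finset.sum_ite_eq' Finset.univ k (fun _ => -(e j))]
      simp
    rw [this, add_zero]
    exact hcol j
  · -- Q ≠ P
    intro hQP
    have h1 : P i 0 + D i 0 = P i 0 := congrFun (congrFun hQP i) 0
    simp only [hD, if_pos rfl, if_neg hik, add_zero, he] at h1
    norm_num at h1
    linarith
  · -- SD
    intro a
    by_cases h1 : a = i
    · have hπ : myπ a = 1 := by rw [h1]; exact hπi
      rw [hπ]
      intro t
      have hsymm : ∀ r : Fin 4, (1 : Equiv.Perm (Fin 4)).symm r = r := fun r => rfl
      simp only [hsymm]
      rw [Finset.sum_add_distrib]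
      have : ∑ r ∈ Finset.Iic t, D a r = ∑ r ∈ Finset.Iic t, e r :=
        Finset.sum_congr rfl (fun r _ => by simp [hD, h1, hik])
      rw [this]
      linarith [eIic t]
    · by_cases h2 : a = k
      · have hπ : myπ a = Equiv.swap 0 1 := by rw [h2]; exact hπk
        rw [hπ]
        intro t
        rw [Equiv.symm_swap]
        rw [Finset.sum_add_distrib]
        have : ∑ r ∈ Finset.Iic t, D a (Equiv.swap 0 1 r) = ∑ r ∈ Finset.Iic t, e r := by
          refine Finset.sum_congr rfl (fun r _ => ?_)
          simp only [hD, h2, if_pos rfl, if_neg hki, zero_add]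
          fin_cases r <;> simp [he, Equiv.swap_apply_def]
        rw [this]
        linarith [eIic t]
      · intro t
        have : ∑ r ∈ Finset.Iic t, D a ((myπ a).symm r) = 0 :=
          Finset.sum_eq_zero (fun r _ => by simp [hD, h1, h2])
        rw [Finset.sum_add_distrib, this]
        simp

theorem OE_LEF_incompatible :
    ∃ (n m : ℕ), n ≤ m ∧
      ∃ (π : Fin n → Equiv.Perm (Fin m)) (ρ : Equiv.Perm (Fin n) → ℝ),
        IsRandomPriority ρ ∧
        ∀ P : Fin n → Fin m → ℝ, IsRandomAssignment P → ¬ (OE π P ∧ LEF π ρ P) := by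
  refine ⟨4, 4, le_refl 4, myπ, myρ, ⟨?_, ?_⟩, ?_⟩
  · intro σ; unfold myρ; split_ifs <;> norm_num
  · rw [sum_myρ]; simp; norm_num
  · rintro P hP ⟨hOE, hLEF⟩
    obtain ⟨L, hL, hind, hcons⟩ := hLEF
    obtain ⟨v01, v12, v13, v23, v31, v30⟩ := prH_vals
    have hs1 : prPrefers myπ L 0 1 + prPrefers myπ L 1 2 + prPrefers myπ L 1 3 +
        prPrefers myπ L 2 3 + prPrefers myπ L 3 1
        ≤ 3 + (induced L 0 1 + induced L 1 1) :=
      sum_bound L hL _ _ _ _ _ 0 1 1 key1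
    have hs2 : prPrefers myπ L 0 1 + prPrefers myπ L 1 3 + prPrefers myπ L 2 3 +
        prPrefers myπ L 3 0 + prPrefers myπ L 3 1
        ≤ 3 + (induced L 2 0 + induced L 3 0) :=
      sum_bound L hL _ _ _ _ _ 2 3 0 key2
    rw [hind] at hs1 hs2
    have c01 := hcons 0 1; rw [v01] at c01
    have c12 := hcons 1 2; rw [v12] at c12
    have c13 := hcons 1 3; rw [v13] at c13
    have c23 := hcons 2 3; rw [v23] at c23
    have c31 := hcons 3 1; rw [v31] at c31
    have c30 := hcons 3 0; rw [v30] at c30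
    have b1 : (1:ℝ)/2 ≤ P 0 1 + P 1 1 := by linarith
    have b2 : (1:ℝ)/2 ≤ P 2 0 + P 3 0 := by linarith
    have hI : 0 < P 0 1 ∨ 0 < P 1 1 := by
      by_contra h; push_neg at h; obtain ⟨ha, hb⟩ := h; linarith
    have hK : 0 < P 2 0 ∨ 0 < P 3 0 := by
      by_contra h; push_neg at h; obtain ⟨ha, hb⟩ := h; linarith
    rcases hI with hi | hi <;> rcases hK with hk | hk
    · exact cycle P hP 0 2 (by decide) rfl rfl hi hk hOE
    · exact cycle P hP 0 3 (by decide) rfl rfl hi hk hOE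
    · exact cycle P hP 1 2 (by decide) rfl rfl hi hk hOE
    · exact cycle P hP 1 3 (by decide) rfl rfl hi hk hOE
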